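/- arXiv:2510.20789 — 5 statements merged into one kernel-verified Lean document; each statement's English description precedes it below -/
import Mathlib

section
/- Let n ≥ 2 and let M ∈ ℂ^{n×n} be Hermitian. If ‖M − I‖_F ≤ 1, then M is positive semidefinite and 2-incoherent. -/
open Matrix BigOperators Finset ComplexOrder

noncomputable section

/-- The number of nonzero entries of a vector in `ℂ^n`. -/
def suppCard {n : ℕ} (v : Fin n → ℂ) : ℕ :=
  (Finset.univ.filter fun i => v i ≠ 0).card

/-- A matrix `X` is `k`-incoherent if it can be written as `∑ vᵢ vᵢ*` where each `vᵢ`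
has at most `k` nonzero entries. -/
def KIncoherent {n : ℕ} (k : ℕ) (X : Matrix (Fin n) (Fin n) ℂ) : Prop :=
  ∃ (m : ℕ) (v : Fin m → (Fin n → ℂ)),
    (∀ i, suppCard (v i) ≤ k) ∧ X = ∑ i, vecMulVec (v i) (star (v i))

/-- The set `I_k` of positive semidefinite, `k`-incoherent matrices with trace at most `1`. -/
def Ik (n k : ℕ) : Set (Matrix (Fin n) (Fin n) ℂ) :=
  {X | X.PosSemidef ∧ KIncoherent k X ∧ X.trace.re ≤ 1}

/-- The Gram matrix of a list of vectors in `ℂ^d`. -/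
def gramMatrix {n d : ℕ} (ψ : Fin n → (Fin d → ℂ)) : Matrix (Fin n) (Fin n) ℂ :=
  Matrix.of fun i j => star (ψ i) ⬝ᵥ ψ j

/-- A list of states `ψ₁, …, ψₙ` is `k`-learnable if there is a POVM indexed by the
`k`-element subsets of `{1, …, n}` such that `⟨ψᵢ, M_S ψᵢ⟩ = 0` whenever `i ∉ S`. -/
def KLearnable {n d : ℕ} (k : ℕ) (ψ : Fin n → (Fin d → ℂ)) : Prop :=
  ∃ M : {S : Finset (Fin n) // S.card = k} → Matrix (Fin d) (Fin d) ℂ,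
    (∀ S, (M S).PosSemidef) ∧ (∑ S, M S) = 1 ∧
    ∀ (S : {S : Finset (Fin n) // S.card = k}) (i : Fin n),
      i ∉ S.val → star (ψ i) ⬝ᵥ ((M S) *ᵥ ψ i) = 0

/-- The Frobenius norm of a square complex matrix. -/
def frobNorm {m : ℕ} (A : Matrix (Fin m) (Fin m) ℂ) : ℝ :=
  Real.sqrt (∑ i, ∑ j, ‖A i j‖ ^ 2)


lemma aux_sqrt_ineq {r s : ℝ} (hr : 0 ≤ r) (hrs : r ≤ s) (hs1 : s ≤ 1) (hs : 0 < s) :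
    Real.sqrt r * Real.sqrt (1 - s) / Real.sqrt s + Real.sqrt (s - r) ≤ 1 := by
  set x := Real.sqrt r
  set y := Real.sqrt (1 - s)
  set z := Real.sqrt (s - r)
  set w := Real.sqrt s
  have hw : 0 < w := Real.sqrt_pos.2 hs
  have hx2 : x ^ 2 = r := Real.sq_sqrt hr
  have hy2 : y ^ 2 = 1 - s := Real.sq_sqrt (by linarith)
  have hz2 : z ^ 2 = s - r := Real.sq_sqrt (by linarith)
  have hw2 : w ^ 2 = s := Real.sq_sqrt hs.le
  have hx : 0 ≤ x := Real.sqrt_nonneg _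
  have hy : 0 ≤ y := Real.sqrt_nonneg _
  have hz : 0 ≤ z := Real.sqrt_nonneg _
  rw [div_add' _ _ _ hw.ne', div_le_one hw]
  nlinarith [sq_nonneg (x * w - z * y), sq_nonneg (x * y + z * w),
    mul_nonneg (mul_nonneg hx hy) (mul_nonneg hz hw.le)]

lemma aux_key_ineq {n : ℕ} (E : Matrix (Fin n) (Fin n) ℂ)
    (hS : ∑ i, ∑ k, ‖E i k‖ ^ 2 ≤ 1) (i : Fin n) (him : (E i i).im = 0) :
    ∑ j ∈ Finset.univ.erase i,
      ‖E i j‖ * Real.sqrt (∑ k, ‖E j k‖ ^ 2) / Real.sqrt (∑ k, ‖E i k‖ ^ 2)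
      ≤ 1 + (E i i).re := by
  set s : Fin n → ℝ := fun j => ∑ k, ‖E j k‖ ^ 2 with hsdef
  have hs0 : ∀ j, 0 ≤ s j := fun j => Finset.sum_nonneg fun k _ => sq_nonneg _
  have hterm : ∀ a b : Fin n, ‖E a b‖ ^ 2 ≤ s a := fun a b =>
    Finset.single_le_sum (fun k _ => sq_nonneg ‖E a k‖) (mem_univ b)
  set r : ℝ := ∑ j ∈ Finset.univ.erase i, ‖E i j‖ ^ 2 with hrdef
  have hr0 : 0 ≤ r := Finset.sum_nonneg fun j _ => sq_nonneg _
  have hsplit : s i = ‖E i i‖ ^ 2 + r := by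
    rw [hsdef]
    exact (Finset.add_sum_erase _ _ (mem_univ i)).symm
  have he2 : ‖E i i‖ ^ 2 = (E i i).re ^ 2 := by
    rw [Complex.sq_norm, Complex.normSq_apply, him]
    ring
  have hs1 : s i ≤ 1 := by
    refine le_trans ?_ hS
    exact Finset.single_le_sum (fun j _ => hs0 j) (mem_univ i)
  have hre2 : (E i i).re ^ 2 = s i - r := by rw [hsplit, ← he2]; ring
  by_cases hsi : s i = 0
  · have hz : ∀ j, ‖E i j‖ = 0 := by
      intro j
      have := hterm i j
      rw [hsi] at this
      nlinarith [sq_nonneg ‖E i j‖, norm_nonneg (E i j)]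
    have h1 : ∑ j ∈ Finset.univ.erase i,
        ‖E i j‖ * Real.sqrt (s j) / Real.sqrt (s i) = 0 := by
      apply Finset.sum_eq_zero
      intro j _
      rw [hz j]; ring
    rw [h1]
    have : (E i i).re ^ 2 = 0 := by
      have := hre2
      have hrs : r ≤ s i := by nlinarith [he2 ▸ hsplit, sq_nonneg (E i i).re]
      nlinarith [hre2, hr0, hsi]
    nlinarith [this]
  · have hsp : 0 < s i := lt_of_le_of_ne (hs0 i) (Ne.symm hsi)
    have hrs : r ≤ s i := by nlinarith [sq_nonneg (E i i).re]
    -- Cauchy–Schwarz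
    have hcs : (∑ j ∈ Finset.univ.erase i, ‖E i j‖ * Real.sqrt (s j)) ^ 2 ≤
        r * ∑ j ∈ Finset.univ.erase i, s j := by
      have h2 : ∑ j ∈ Finset.univ.erase i, Real.sqrt (s j) ^ 2 =
          ∑ j ∈ Finset.univ.erase i, s j :=
        Finset.sum_congr rfl fun j _ => Real.sq_sqrt (hs0 j)
      calc (∑ j ∈ Finset.univ.erase i, ‖E i j‖ * Real.sqrt (s j)) ^ 2
          ≤ (∑ j ∈ Finset.univ.erase i, ‖E i j‖ ^ 2) *
            ∑ j ∈ Finset.univ.erase i, Real.sqrt (s j) ^ 2 :=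
            Finset.sum_mul_sq_le_sq_mul_sq _ _ _
        _ = r * ∑ j ∈ Finset.univ.erase i, s j := by rw [h2]
    have hrest : ∑ j ∈ Finset.univ.erase i, s j ≤ 1 - s i := by
      have : ∑ j ∈ Finset.univ.erase i, s j = (∑ j, s j) - s i :=
        Finset.sum_erase_eq_sub (mem_univ i)
      rw [this]
      have : ∑ j, s j ≤ 1 := hS
      linarith
    have hnum0 : 0 ≤ ∑ j ∈ Finset.univ.erase i, ‖E i j‖ * Real.sqrt (s j) :=
      Finset.sum_nonneg fun j _ => mul_nonneg (norm_nonneg _) (Real.sqrt_nonneg _)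
    have hcs2 : (∑ j ∈ Finset.univ.erase i, ‖E i j‖ * Real.sqrt (s j)) ^ 2 ≤ r * (1 - s i) := by
      calc _ ≤ r * ∑ j ∈ Finset.univ.erase i, s j := hcs
        _ ≤ r * (1 - s i) := by
            apply mul_le_mul_of_nonneg_left hrest hr0
    have hnum : ∑ j ∈ Finset.univ.erase i, ‖E i j‖ * Real.sqrt (s j) ≤
        Real.sqrt r * Real.sqrt (1 - s i) := by
      rw [← Real.sqrt_mul hr0]
      rw [show Real.sqrt (r * (1 - s i)) = Real.sqrt (r * (1 - s i)) from rfl]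
      have := Real.sqrt_le_sqrt hcs2
      rwa [Real.sqrt_sq hnum0] at this
    have hdiv : ∑ j ∈ Finset.univ.erase i, ‖E i j‖ * Real.sqrt (s j) / Real.sqrt (s i) ≤
        Real.sqrt r * Real.sqrt (1 - s i) / Real.sqrt (s i) := by
      rw [← Finset.sum_div]
      exact div_le_div_of_nonneg_right hnum (Real.sqrt_nonneg _)
    have habs : Real.sqrt (s i - r) = |(E i i).re| := by
      rw [← hre2, Real.sqrt_sq_eq_abs]
    have hlow : 1 - Real.sqrt (s i - r) ≤ 1 + (E i i).re := by
      rw [habs]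
      have := neg_abs_le (E i i).re
      linarith
    have := aux_sqrt_ineq hr0 hrs hs1 hsp
    linarith [hdiv, this, hlow]

lemma aux_suppCard_le_two {n : ℕ} (w : Fin n → ℂ) (i j : Fin n)
    (h : ∀ l, l ≠ i → l ≠ j → w l = 0) : suppCard w ≤ 2 := by
  classical
  have hsub : (Finset.univ.filter fun l => w l ≠ 0) ⊆ {i, j} := by
    intro l hl
    simp only [Finset.mem_filter] at hl
    by_contra hc
    simp only [Finset.mem_insert, Finset.mem_singleton, not_or] at hc
    exact hl.2 (h l hc.1 hc.2)
  calc suppCard w ≤ ({i, j} : Finset (Fin n)).card := Finset.card_le_card hsub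
    _ ≤ 2 := by
        refine le_trans (Finset.card_insert_le _ _) ?_
        simp

/-- If a Hermitian matrix `M` satisfies `‖M - I‖_F ≤ 1`, then `M` is positive semidefinite
and `2`-incoherent. -/
theorem twoIncoherent_of_close_to_id (n : ℕ) (hn : 2 ≤ n)
    (M : Matrix (Fin n) (Fin n) ℂ) (hM : M.IsHermitian)
    (hclose : frobNorm (M - (1 : Matrix (Fin n) (Fin n) ℂ)) ≤ 1) :
    M.PosSemidef ∧ KIncoherent 2 M := by
  classical
  set E : Matrix (Fin n) (Fin n) ℂ := M - 1 with hEdef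
  have hEH : E.IsHermitian := hM.sub Matrix.isHermitian_one
  have hEsym : ∀ i j : Fin n, star (E j i) = E i j := fun i j => hEH.apply i j
  have hnormsym : ∀ i j : Fin n, ‖E j i‖ = ‖E i j‖ := fun i j => by
    rw [← hEsym i j, norm_star]
  have hEzero : ∀ i j : Fin n, E i j = 0 → E j i = 0 := fun i j h => by
    rw [← hEsym j i, h, star_zero]
  have hS : ∑ i, ∑ k, ‖E i k‖ ^ 2 ≤ 1 := by
    have h0 : 0 ≤ ∑ i, ∑ k, ‖E i k‖ ^ 2 :=
      Finset.sum_nonneg fun i _ => Finset.sum_nonneg fun k _ => sq_nonneg _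
    unfold frobNorm at hclose
    nlinarith [Real.sq_sqrt h0, Real.sqrt_nonneg (∑ i, ∑ k, ‖E i k‖ ^ 2)]
  have hs0 : ∀ j, 0 ≤ ∑ k, ‖E j k‖ ^ 2 := fun j => Finset.sum_nonneg fun k _ => sq_nonneg _
  set d : Fin n → Fin n → ℝ := fun i j =>
    ‖E i j‖ * Real.sqrt (∑ k, ‖E j k‖ ^ 2) / Real.sqrt (∑ k, ‖E i k‖ ^ 2) with hddef
  have hd0 : ∀ i j, 0 ≤ d i j := fun i j =>
    div_nonneg (mul_nonneg (norm_nonneg _) (Real.sqrt_nonneg _)) (Real.sqrt_nonneg _)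
  have hspos : ∀ i j, E i j ≠ 0 → 0 < ∑ k, ‖E i k‖ ^ 2 ∧ 0 < ∑ k, ‖E j k‖ ^ 2 := by
    intro i j h
    have h1 : ‖E i j‖ ^ 2 ≤ ∑ k, ‖E i k‖ ^ 2 :=
      Finset.single_le_sum (fun k _ => sq_nonneg ‖E i k‖) (Finset.mem_univ j)
    have h2 : ‖E j i‖ ^ 2 ≤ ∑ k, ‖E j k‖ ^ 2 :=
      Finset.single_le_sum (fun k _ => sq_nonneg ‖E j k‖) (Finset.mem_univ i)
    have hp : 0 < ‖E i j‖ := norm_pos_iff.2 h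
    have hp2 : 0 < ‖E j i‖ := by rw [hnormsym]; exact hp
    constructor <;> nlinarith
  have hdpos : ∀ i j, E i j ≠ 0 → 0 < d i j := by
    intro i j h
    obtain ⟨h1, h2⟩ := hspos i j h
    exact div_pos (mul_pos (norm_pos_iff.2 h) (Real.sqrt_pos.2 h2)) (Real.sqrt_pos.2 h1)
  have hdzero : ∀ i j, E i j = 0 → d i j = 0 := by
    intro i j h
    simp only [hddef, h, norm_zero, zero_mul, zero_div]
  have hdd : ∀ i j, d i j * d j i = ‖E i j‖ ^ 2 := by
    intro i j
    by_cases h : E i j = 0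
    · rw [hdzero i j h, hdzero j i (hEzero i j h), zero_mul, h, norm_zero]
      ring
    · obtain ⟨h1, h2⟩ := hspos i j h
      have hs1 : Real.sqrt (∑ k, ‖E i k‖ ^ 2) ≠ 0 := (Real.sqrt_pos.2 h1).ne'
      have hs2 : Real.sqrt (∑ k, ‖E j k‖ ^ 2) ≠ 0 := (Real.sqrt_pos.2 h2).ne'
      have haux : ∀ (a x y : ℝ), x ≠ 0 → y ≠ 0 → a * y / x * (a * x / y) = a ^ 2 := by
        intro a x y hx hy
        field_simp
      simp only [hddef]
      rw [hnormsym i j]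
      exact haux _ _ _ hs1 hs2
  have hkey : ∀ i, ∑ j ∈ Finset.univ.erase i, d i j ≤ 1 + (E i i).re := by
    intro i
    have him : (E i i).im = 0 := by
      have h := hEsym i i
      rw [Complex.star_def, Complex.conj_eq_iff_im] at h
      exact h
    simp only [hddef]
    exact aux_key_ineq E hS i him
  set t : Fin n → ℝ := fun i => 1 + (E i i).re - ∑ j ∈ Finset.univ.erase i, d i j
    with htdef
  have ht0 : ∀ i, 0 ≤ t i := by
    intro i
    have := hkey i
    simp only [htdef]
    linarith
  -- the vectors
  set vL : Fin n → Fin n → ℂ :=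
    fun i l => if l = i then ((Real.sqrt (t i) : ℝ) : ℂ) else 0 with hvLdef
  set vR : Fin n × Fin n → Fin n → ℂ := fun q l =>
    if q.1 = q.2 then 0
    else if l = q.1 then ((Real.sqrt (d q.1 q.2 / 2) : ℝ) : ℂ)
    else if l = q.2 then star (E q.1 q.2) / ((Real.sqrt (2 * d q.1 q.2) : ℝ) : ℂ)
    else 0 with hvRdef
  have hratio : ∀ i j : Fin n, E i j ≠ 0 →
      Real.sqrt (d i j / 2) / Real.sqrt (2 * d i j) = 1 / 2 := by
    intro i j h
    have hd := hdpos i j h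
    rw [← Real.sqrt_div (by positivity)]
    have heq : d i j / 2 / (2 * d i j) = 1 / 4 := by
      field_simp
      ring
    rw [heq, show (1 : ℝ) / 4 = (1 / 2) ^ 2 by norm_num, Real.sqrt_sq (by norm_num)]
  have hPz : ∀ (i j l : Fin n), l ≠ i → l ≠ j → vR (i, j) l = 0 := by
    intro i j l h1 h2
    simp [hvRdef, h1, h2]
  have hP1 : ∀ i j : Fin n, i ≠ j → vR (i, j) i * star (vR (i, j) i) =
      ((d i j / 2 : ℝ) : ℂ) := by
    intro i j hij
    simp only [hvRdef, if_neg hij, if_pos rfl, ite_true]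
    rw [Complex.star_def, Complex.conj_ofReal, ← Complex.ofReal_mul,
      Real.mul_self_sqrt (by positivity)]
  have hP2 : ∀ i j : Fin n, i ≠ j → vR (i, j) i * star (vR (i, j) j) = E i j / 2 := by
    intro i j hij
    simp only [hvRdef, if_neg hij, if_pos rfl, if_neg (Ne.symm hij), ite_true]
    by_cases h : E i j = 0
    · simp [h]
    · rw [star_div₀, star_star, Complex.star_def, Complex.conj_ofReal]
      rw [show ((Real.sqrt (d i j / 2) : ℝ) : ℂ) * (E i j / ((Real.sqrt (2 * d i j) : ℝ) : ℂ))
          = E i j * (((Real.sqrt (d i j / 2) / Real.sqrt (2 * d i j) : ℝ)) : ℂ) by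
        push_cast; ring]
      rw [hratio i j h]
      push_cast
      ring
  have hP3 : ∀ i j : Fin n, i ≠ j → vR (i, j) j * star (vR (i, j) i) =
      star (E i j) / 2 := by
    intro i j hij
    simp only [hvRdef, if_neg hij, if_pos rfl, if_neg (Ne.symm hij), ite_true]
    by_cases h : E i j = 0
    · simp [h]
    · rw [show star (E i j) / ((Real.sqrt (2 * d i j) : ℝ) : ℂ) * star ((Real.sqrt (d i j / 2) : ℝ) : ℂ)
          = star (E i j) * (((Real.sqrt (d i j / 2) / Real.sqrt (2 * d i j) : ℝ)) : ℂ) by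
        rw [Complex.star_def, Complex.conj_ofReal]
        push_cast; ring]
      rw [hratio i j h]
      push_cast
      ring
  have hP4 : ∀ i j : Fin n, i ≠ j → vR (i, j) j * star (vR (i, j) j) =
      ((d j i / 2 : ℝ) : ℂ) := by
    intro i j hij
    simp only [hvRdef, if_neg hij, if_pos rfl, if_neg (Ne.symm hij), ite_true]
    by_cases h : E i j = 0
    · simp [h, hdzero j i (hEzero i j h)]
    · have hd := hdpos i j h
      rw [star_div₀, star_star, Complex.star_def, Complex.conj_ofReal]
      rw [div_mul_div_comm, ← Complex.ofReal_mul,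
        Real.mul_self_sqrt (by positivity)]
      rw [show (starRingEnd ℂ) (E i j) * E i j = ((‖E i j‖ ^ 2 : ℝ) : ℂ) by
        rw [mul_comm, Complex.mul_conj, Complex.normSq_eq_norm_sq]]
      rw [← hdd i j]
      rw [div_eq_iff (by
        simp only [ne_eq, Complex.ofReal_eq_zero]
        positivity)]
      push_cast
      ring
  set v : (Fin n ⊕ Fin n × Fin n) → Fin n → ℂ := Sum.elim vL vR with hvdef
  -- the decomposition identity
  have hid : M = ∑ p : Fin n ⊕ Fin n × Fin n, vecMulVec (v p) (star (v p)) := by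
    ext a b
    rw [Matrix.sum_apply, Fintype.sum_sum_type]
    simp only [hvdef, Sum.elim_inl, Sum.elim_inr, vecMulVec_apply, Pi.star_apply]
    have hLsum : ∑ i, vL i a * star (vL i b) = if a = b then ((t a : ℝ) : ℂ) else 0 := by
      by_cases hab : a = b
      · subst hab
        rw [if_pos rfl]
        have h1 : ∑ i, vL i a * star (vL i a) = vL a a * star (vL a a) :=
          Finset.sum_eq_single_of_mem a (Finset.mem_univ a) (fun i _ hi => by
            simp [hvLdef, if_neg (show a ≠ i from fun h => hi h.symm)])
        rw [h1]
        simp only [hvLdef, if_pos rfl]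
        rw [Complex.star_def, Complex.conj_ofReal, ← Complex.ofReal_mul,
          Real.mul_self_sqrt (ht0 a)]
      · rw [if_neg hab]
        apply Finset.sum_eq_zero
        intro i _
        by_cases hai : a = i
        · have hbi : b ≠ i := fun h => hab (hai.trans h.symm)
          simp [hvLdef, if_neg hbi]
        · simp [hvLdef, if_neg hai]
    have hRsum : ∑ q : Fin n × Fin n, vR q a * star (vR q b) =
        if a = b then ((∑ j ∈ Finset.univ.erase a, d a j : ℝ) : ℂ) else E a b := by
      by_cases hab : a = b
      · subst hab
        rw [if_pos rfl, Fintype.sum_prod_type]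
        have houter : ∀ i ∈ Finset.univ.erase a,
            ∑ j, vR (i, j) a * star (vR (i, j) a) = ((d a i / 2 : ℝ) : ℂ) := by
          intro i hi
          have hia : i ≠ a := Finset.ne_of_mem_erase hi
          have h1 : ∑ j, vR (i, j) a * star (vR (i, j) a) =
              vR (i, a) a * star (vR (i, a) a) :=
            Finset.sum_eq_single_of_mem a (Finset.mem_univ a) (fun j _ hj => by
              rw [hPz i j a (Ne.symm hia) (fun h => hj h.symm)]
              ring)
          rw [h1]
          exact hP4 i a hia
        have hinner : ∑ j, vR (a, j) a * star (vR (a, j) a) =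
            ∑ j ∈ Finset.univ.erase a, ((d a j / 2 : ℝ) : ℂ) := by
          have hz : vR (a, a) a * star (vR (a, a) a) = 0 := by
            simp [hvRdef]
          have h2 : ∑ j, vR (a, j) a * star (vR (a, j) a) =
              ∑ j ∈ Finset.univ.erase a, vR (a, j) a * star (vR (a, j) a) :=
            (Finset.sum_erase (f := fun j => vR (a, j) a * star (vR (a, j) a)) (a := a) Finset.univ hz).symm
          rw [h2]
          exact Finset.sum_congr rfl fun j hj =>
            hP1 a j (Ne.symm (Finset.ne_of_mem_erase hj))
        rw [← Finset.add_sum_erase Finset.univ _ (Finset.mem_univ a), hinner,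
          Finset.sum_congr rfl houter, ← Finset.sum_add_distrib,
          Complex.ofReal_sum]
        refine Finset.sum_congr rfl fun j _ => ?_
        push_cast
        ring
      · rw [if_neg hab]
        have hzero : ∀ q : Fin n × Fin n, q ≠ (a, b) → q ≠ (b, a) →
            vR q a * star (vR q b) = 0 := by
          rintro ⟨i, j⟩ hq1 hq2
          by_cases hij : i = j
          · simp [hvRdef, hij]
          by_cases hai : a = i
          · by_cases hbj : b = j
            · exact absurd (by rw [← hai, ← hbj]) hq1
            · have hbi : b ≠ i := fun h => hab (hai.trans h.symm)
              rw [hPz i j b hbi hbj]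
              simp
          · by_cases haj : a = j
            · by_cases hbi : b = i
              · exact absurd (by rw [← hbi, ← haj]) hq2
              · have hbj : b ≠ j := fun h => hab (h.trans haj.symm).symm
                rw [hPz i j b hbi hbj]
                simp
            · rw [hPz i j a hai haj]
              ring
        have hne : ((a, b) : Fin n × Fin n) ≠ (b, a) := by
          simp [Prod.ext_iff, hab]
        have hsum2 : ∑ q : Fin n × Fin n, vR q a * star (vR q b) =
            vR (a, b) a * star (vR (a, b) b) + vR (b, a) a * star (vR (b, a) b) := by
          calc ∑ q : Fin n × Fin n, vR q a * star (vR q b)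
              = ∑ q ∈ ({(a, b), (b, a)} : Finset (Fin n × Fin n)),
                  vR q a * star (vR q b) := by
                refine (Finset.sum_subset (Finset.subset_univ _) ?_).symm
                intro q _ hq
                simp only [Finset.mem_insert, Finset.mem_singleton, not_or] at hq
                exact hzero q hq.1 hq.2
            _ = vR (a, b) a * star (vR (a, b) b) + vR (b, a) a * star (vR (b, a) b) :=
                Finset.sum_pair hne
        rw [hsum2, hP2 a b hab]
        have h3 : vR (b, a) a * star (vR (b, a) b) = E a b / 2 := by
          rw [hP3 b a (Ne.symm hab), hEsym a b]
        rw [h3]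
        ring
    rw [hLsum, hRsum]
    by_cases hab : a = b
    · subst hab
      rw [if_pos rfl, if_pos rfl]
      have hMre : ((M a a).re : ℂ) = M a a := by
        have h := hM.apply a a
        rw [Complex.star_def] at h
        exact Complex.conj_eq_iff_re.mp h
      have hEre : (E a a).re = (M a a).re - 1 := by
        rw [hEdef]
        simp [Matrix.sub_apply, Matrix.one_apply_eq]
      rw [← hMre]
      simp only [htdef]
      rw [hEre]
      push_cast
      ring
    · rw [if_neg hab, if_neg hab]
      have hEab : E a b = M a b := by
        rw [hEdef]
        simp [Matrix.sub_apply, Matrix.one_apply_ne hab]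
      rw [hEab]
      ring
  constructor
  · rw [hid]
    refine Finset.sum_induction _ _ (fun a b ha hb => ha.add hb) Matrix.PosSemidef.zero
      (fun p _ => ?_)
    have hv : vecMulVec (v p) (star (v p)) =
        Matrix.replicateCol (Fin 1) (v p) * (Matrix.replicateCol (Fin 1) (v p))ᴴ := by
      rw [Matrix.conjTranspose_replicateCol, Matrix.vecMulVec_eq (Fin 1)]
      rfl
    rw [hv]
    exact Matrix.posSemidef_self_mul_conjTranspose _
  · refine ⟨Fintype.card (Fin n ⊕ Fin n × Fin n),
      fun k => v ((Fintype.equivFin (Fin n ⊕ Fin n × Fin n)).symm k), fun k => ?_, ?_⟩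
    · rcases h : (Fintype.equivFin (Fin n ⊕ Fin n × Fin n)).symm k with i | q
      · simp only [h]
        refine aux_suppCard_le_two _ i i fun l hl _ => ?_
        simp [hvdef, hvLdef, hl]
      · simp only [h]
        refine aux_suppCard_le_two _ q.1 q.2 fun l h1 h2 => ?_
        simpa [hvdef] using hPz q.1 q.2 l h1 h2
    · rw [hid]
      exact (Equiv.sum_comp (Fintype.equivFin (Fin n ⊕ Fin n × Fin n)).symm
        (fun p => vecMulVec (v p) (star (v p)))).symm
end
end

section
/- Let n, k be integers with 2 ≤ k ≤ n, let u ∈ ℂ^n be a unit vector supported on at most k coordinates, let x be a real number with 0 < x ≤ 1, and let δ be a real number with 0 < δ ≤ x/(2n). Set D := (1 − δ·sqrt(n))·(x·I/n + (1−x)·u u*). Then for every Hermitian matrix E ∈ ℂ^{n×n} with ‖E‖_F ≤ δ, the matrix D + E belongs to I_k; that is, the closed Frobenius-norm ball of radius δ centered at D is contained in I_k. -/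
open Matrix BigOperators Finset ComplexOrder

noncomputable section

lemma suppCard_le_of_subset {n : ℕ} (v : Fin n → ℂ) (S : Finset (Fin n))
    (h : ∀ l, v l ≠ 0 → l ∈ S) : suppCard v ≤ S.card := by
  apply Finset.card_le_card
  intro l hl
  simp only [Finset.mem_filter] at hl
  exact h l hl.2

lemma kinc_zero {n k : ℕ} : KIncoherent k (0 : Matrix (Fin n) (Fin n) ℂ) :=
  ⟨0, Fin.elim0, fun i => i.elim0, by simp⟩

lemma kinc_single {n k : ℕ} (v : Fin n → ℂ) (h : suppCard v ≤ k) :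
    KIncoherent k (vecMulVec v (star v)) :=
  ⟨1, fun _ => v, fun _ => h, by simp⟩

lemma kinc_add {n k : ℕ} {X Y : Matrix (Fin n) (Fin n) ℂ}
    (hX : KIncoherent k X) (hY : KIncoherent k Y) : KIncoherent k (X + Y) := by
  obtain ⟨m₁, v₁, hs₁, rfl⟩ := hX
  obtain ⟨m₂, v₂, hs₂, rfl⟩ := hY
  refine ⟨m₁ + m₂, Fin.append v₁ v₂, ?_, ?_⟩
  · intro i
    refine Fin.addCases (fun j => ?_) (fun j => ?_) i
    · rw [Fin.append_left]; exact hs₁ j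
    · rw [Fin.append_right]; exact hs₂ j
  · rw [Fin.sum_univ_add]
    congr 1 <;> apply Finset.sum_congr rfl <;> intro j _
    · rw [Fin.append_left]
    · rw [Fin.append_right]

lemma kinc_sum {n k : ℕ} {ι : Type*} (s : Finset ι) (f : ι → Matrix (Fin n) (Fin n) ℂ)
    (h : ∀ i ∈ s, KIncoherent k (f i)) : KIncoherent k (∑ i ∈ s, f i) :=
  Finset.sum_induction f _ (fun _ _ ha hb => kinc_add ha hb) kinc_zero h

lemma posSemidef_vecMulVec_star {n : ℕ} (v : Fin n → ℂ) :
    (vecMulVec v (star v)).PosSemidef := by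
  apply Matrix.PosSemidef.of_dotProduct_mulVec_nonneg
  · ext i j
    simp [vecMulVec_apply, conjTranspose_apply, mul_comm]
  · intro x
    have h : star x ⬝ᵥ (vecMulVec v (star v)) *ᵥ x
        = star (star v ⬝ᵥ x) * (star v ⬝ᵥ x) := by
      simp only [dotProduct, mulVec, vecMulVec_apply, Pi.star_apply, star_sum, star_mul',
        Finset.mul_sum, Finset.sum_mul]
      rw [Finset.sum_comm]
      apply Finset.sum_congr rfl; intro i _
      apply Finset.sum_congr rfl; intro j _
      ring_nf
      simp [mul_comm, mul_assoc, mul_left_comm]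
    rw [h]
    exact star_mul_self_nonneg _

lemma exists_pos_solution {n : ℕ} (M : Matrix (Fin n) (Fin n) ℝ)
    (hoff : ∀ i j, i ≠ j → M i j ≤ 0)
    (hPD : ∀ y : Fin n → ℝ, y ≠ 0 → 0 < y ⬝ᵥ (M *ᵥ y)) :
    ∃ d : Fin n → ℝ, (∀ i, 0 < d i) ∧ M *ᵥ d = fun _ => 1 := by
  have hdet : M.det ≠ 0 := by
    intro h0
    obtain ⟨v, hv, hMv⟩ := Matrix.exists_mulVec_eq_zero_iff.mpr h0
    have := hPD v hv
    rw [hMv] at this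
    simp at this
  set d : Fin n → ℝ := M⁻¹ *ᵥ (fun _ => 1) with hd
  have hMd : M *ᵥ d = fun _ => 1 := by
    rw [hd, Matrix.mulVec_mulVec, Matrix.mul_nonsing_inv _ (isUnit_iff_ne_zero.mpr hdet),
      Matrix.one_mulVec]
  -- negative part
  set g : Fin n → ℝ := fun i => max (-d i) 0 with hg
  have hg0 : ∀ i, 0 ≤ g i := fun i => le_max_right _ _
  have hgd : ∀ i, g i * (d i + g i) = 0 := by
    intro i
    rcases le_total (d i) 0 with h | h
    · have : g i = -d i := max_eq_left (by linarith)
      rw [this]; ring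
    · have : g i = 0 := max_eq_right (by linarith)
      rw [this]; ring
  have hgzero : g = 0 := by
    by_contra hne
    have hpos := hPD g hne
    -- g ⬝ᵥ M *ᵥ g = g ⬝ᵥ M *ᵥ (d + g) - g ⬝ᵥ M *ᵥ d
    have e1 : g ⬝ᵥ M *ᵥ g = g ⬝ᵥ M *ᵥ (fun i => d i + g i) - g ⬝ᵥ M *ᵥ d := by
      have : (fun i => d i + g i) = d + g := rfl
      rw [this, Matrix.mulVec_add, dotProduct_add]; ring
    have e2 : g ⬝ᵥ M *ᵥ d = ∑ i, g i := by
      rw [hMd]; simp [dotProduct]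
    have e3 : g ⬝ᵥ M *ᵥ (fun i => d i + g i) ≤ 0 := by
      have : g ⬝ᵥ M *ᵥ (fun i => d i + g i) = ∑ i, ∑ j, g i * (M i j * (d j + g j)) := by
        simp [dotProduct, mulVec, Finset.mul_sum]
      rw [this]
      apply Finset.sum_nonpos; intro i _
      apply Finset.sum_nonpos; intro j _
      rcases eq_or_ne i j with rfl | hij
      · calc g i * (M i i * (d i + g i)) = M i i * (g i * (d i + g i)) := by ring
          _ = 0 := by rw [hgd i]; ring
          _ ≤ 0 := le_refl 0
      · have h1 : 0 ≤ d j + g j := by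
          rcases le_total (d j) 0 with h | h
          · have : g j = -d j := max_eq_left (by linarith)
            rw [this]; linarith
          · have : 0 ≤ g j := hg0 j
            linarith
        have h2 : 0 ≤ g i * (d j + g j) := mul_nonneg (hg0 i) h1
        calc g i * (M i j * (d j + g j)) = M i j * (g i * (d j + g j)) := by ring
          _ ≤ 0 := mul_nonpos_of_nonpos_of_nonneg (hoff i j hij) h2
    have e4 : 0 ≤ ∑ i, g i := Finset.sum_nonneg fun i _ => hg0 i
    rw [e1, e2] at hpos
    linarith
  have hdnn : ∀ i, 0 ≤ d i := by
    intro i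
    have h' : max (-d i) 0 = 0 := congrFun hgzero i
    have h2 := le_max_left (-d i) (0:ℝ)
    rw [h'] at h2
    linarith
  refine ⟨d, ?_, hMd⟩
  intro i
  have h1 : (M *ᵥ d) i = 1 := by rw [hMd]
  have h2 : (M *ᵥ d) i = M i i * d i + ∑ j ∈ Finset.univ.erase i, M i j * d j := by
    simp only [mulVec, dotProduct]
    rw [← Finset.add_sum_erase _ _ (Finset.mem_univ i)]
  have h3 : ∑ j ∈ Finset.univ.erase i, M i j * d j ≤ 0 := by
    apply Finset.sum_nonpos; intro j hj
    have hij : i ≠ j := (Finset.ne_of_mem_erase hj).symm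
    exact mul_nonpos_of_nonpos_of_nonneg (hoff i j hij) (hdnn j)
  have h4 : 1 ≤ M i i * d i := by rw [h1] at h2; linarith
  rcases (hdnn i).lt_or_eq with h | h
  · exact h
  · exfalso; rw [← h] at h4; simp at h4; linarith

set_option maxHeartbeats 2000000 in
/-- The closed Frobenius ball of radius `δ ≤ x/(2n)` centered at
`D = (1 - δ√n)(x·I/n + (1-x)·u u*)` is contained in `I_k`, whenever `u` is a unit vector
supported on at most `k` coordinates. -/
theorem ball_around_Dx_subset_Ik (n k : ℕ) (hk : 2 ≤ k) (hkn : k ≤ n)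
    (u : Fin n → ℂ) (hu : (∑ i, ‖u i‖ ^ 2) = 1) (hsupp : suppCard u ≤ k)
    (x δ : ℝ) (hx0 : 0 < x) (hx1 : x ≤ 1) (hδ0 : 0 < δ) (hδ : δ ≤ x / (2 * n)) :
    ∀ E : Matrix (Fin n) (Fin n) ℂ, E.IsHermitian → frobNorm E ≤ δ →
      (((1 - δ * Real.sqrt n : ℝ) : ℂ) •
          (((x / n : ℝ) : ℂ) • (1 : Matrix (Fin n) (Fin n) ℂ) +
            ((1 - x : ℝ) : ℂ) • vecMulVec u (star u))) + E ∈ Ik n k := by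
  intro E hE hEF
  classical
  have hn2 : (2:ℕ) ≤ n := le_trans hk hkn
  have hn0 : (0:ℝ) < (n:ℝ) := by
    have : (0:ℕ) < n := by omega
    exact_mod_cast this
  have hn1 : (1:ℝ) < (n:ℝ) := by
    have : (1:ℕ) < n := by omega
    exact_mod_cast this
  set s : ℝ := Real.sqrt n with hs_def
  have hs0 : 0 < s := Real.sqrt_pos.mpr hn0
  have hss : s * s = (n:ℝ) := Real.mul_self_sqrt hn0.le
  have hs1 : 1 < s := by nlinarith [hss, hs0]
  have hδs : δ * s < 1/2 := by
    have h1 : δ * s ≤ (x / (2*n)) * s := mul_le_mul_of_nonneg_right hδ hs0.le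
    have h2 : (x / (2*n)) * s = x / (2*s) := by
      rw [← hss]; field_simp
    have h3 : x / (2*s) < x / 2 := by
      apply div_lt_div_of_pos_left hx0 (by norm_num) (by nlinarith)
    linarith
  set γ : ℝ := 1 - δ * s with hγ_def
  have hγhalf : 1/2 < γ := by rw [hγ_def]; linarith
  have hγ0 : 0 < γ := by linarith
  set c : ℝ := γ * (x / n) with hc_def
  have hxn : 0 < x / n := div_pos hx0 hn0
  have hc0 : 0 < c := mul_pos hγ0 hxn
  have hδc : δ < c := by
    have h1 : δ ≤ (x/n) * (1/2) := by
      calc δ ≤ x / (2*n) := hδ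
        _ = (x/n) * (1/2) := by ring
    have h2 : (x/n) * (1/2) < (x/n) * γ := by
      exact mul_lt_mul_of_pos_left hγhalf hxn
    have h3 : c = (x/n) * γ := by rw [hc_def]; ring
    linarith
  -- Frobenius norm squared bound
  have hFr : ∑ i, ∑ j, ‖E i j‖^2 ≤ δ^2 := by
    have h0 : 0 ≤ ∑ i, ∑ j, ‖E i j‖^2 :=
      Finset.sum_nonneg fun i _ => Finset.sum_nonneg fun j _ => sq_nonneg _
    unfold frobNorm at hEF
    have hEF' : Real.sqrt (∑ i, ∑ j, ‖E i j‖^2) ≤ δ := hEF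
    calc ∑ i, ∑ j, ‖E i j‖^2 = (Real.sqrt (∑ i, ∑ j, ‖E i j‖^2))^2 := (Real.sq_sqrt h0).symm
      _ ≤ δ^2 := by apply pow_le_pow_left₀ (Real.sqrt_nonneg _) hEF'
  -- Hermitian facts
  have hEc : ∀ i j, (starRingEnd ℂ) (E i j) = E j i := fun i j => hE.apply j i
  have habs : ∀ i j, ‖E i j‖ = ‖E j i‖ := by
    intro i j; rw [← hEc i j, RCLike.norm_conj]
  have hdiagre : ∀ i, E i i = ((E i i).re : ℂ) := by
    intro i
    exact (Complex.conj_eq_iff_re.mp (hEc i i)).symm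
  -- the comparison matrix
  set M : Matrix (Fin n) (Fin n) ℝ :=
    Matrix.of (fun i j => if i = j then c + (E i i).re else -‖E i j‖) with hM_def
  have hMapp : ∀ i j, M i j = if i = j then c + (E i i).re else -‖E i j‖ := fun i j => rfl
  have hoff : ∀ i j, i ≠ j → M i j ≤ 0 := by
    intro i j hij
    rw [hMapp, if_neg hij]
    simp [norm_nonneg]
  have hCsum : ∑ z : Fin n × Fin n,
      (if z.1 = z.2 then (E z.1 z.1).re else -‖E z.1 z.2‖)^2 ≤ δ^2 := by
    rw [Fintype.sum_prod_type]
    refine le_trans ?_ hFr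
    apply Finset.sum_le_sum; intro i _
    apply Finset.sum_le_sum; intro j _
    by_cases h : i = j
    · subst h; simp only [if_pos rfl]
      have h1 := Complex.abs_re_le_norm (E i i)
      calc (E i i).re^2 = |(E i i).re|^2 := (sq_abs _).symm
        _ ≤ (‖E i i‖)^2 := by
            apply pow_le_pow_left₀ (abs_nonneg _) h1
    · rw [if_neg h, neg_sq]
  have hPD : ∀ y : Fin n → ℝ, y ≠ 0 → 0 < y ⬝ᵥ M *ᵥ y := by
    intro y hy
    have hy2pos : 0 < ∑ i, y i ^ 2 := by
      obtain ⟨i, hi⟩ := Function.ne_iff.mp hy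
      exact Finset.sum_pos' (fun j _ => sq_nonneg _)
        ⟨i, Finset.mem_univ i, lt_of_le_of_ne (sq_nonneg _) (Ne.symm (pow_ne_zero 2 hi))⟩
    have hexp : y ⬝ᵥ M *ᵥ y = c * (∑ i, y i^2)
        + ∑ z : Fin n × Fin n, (if z.1 = z.2 then (E z.1 z.1).re else -‖E z.1 z.2‖) * (y z.1 * y z.2) := by
      rw [Fintype.sum_prod_type]
      have step1 : y ⬝ᵥ M *ᵥ y
          = ∑ i, ∑ j, y i * ((if i = j then c + (E i i).re else -‖E i j‖) * y j) := by
        simp only [dotProduct, mulVec, hMapp, Finset.mul_sum]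
      rw [step1]
      have step2 : ∀ i j : Fin n, y i * ((if i = j then c + (E i i).re else -‖E i j‖) * y j)
          = (if i = j then c * (y i * y j) else 0)
            + (if i = j then (E i i).re else -‖E i j‖) * (y i * y j) := by
        intro i j
        split_ifs <;> ring
      calc ∑ i, ∑ j, y i * ((if i = j then c + (E i i).re else -‖E i j‖) * y j)
          = ∑ i, ∑ j, ((if i = j then c * (y i * y j) else 0)
              + (if i = j then (E i i).re else -‖E i j‖) * (y i * y j)) := by
            exact Finset.sum_congr rfl fun i _ => Finset.sum_congr rfl fun j _ => step2 i j
        _ = (∑ i, ∑ j, (if i = j then c * (y i * y j) else 0))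
            + ∑ i, ∑ j, (if i = j then (E i i).re else -‖E i j‖) * (y i * y j) := by
            rw [← Finset.sum_add_distrib]
            exact Finset.sum_congr rfl fun i _ => by rw [← Finset.sum_add_distrib]
        _ = c * (∑ i, y i^2)
            + ∑ i, ∑ j, (if i = j then (E i i).re else -‖E i j‖) * (y i * y j) := by
            congr 1
            rw [Finset.mul_sum]
            apply Finset.sum_congr rfl; intro i _
            rw [Finset.sum_ite_eq univ i (fun j => c * (y i * y j))]
            simp [sq]
    set R := ∑ z : Fin n × Fin n,
        (if z.1 = z.2 then (E z.1 z.1).re else -‖E z.1 z.2‖) * (y z.1 * y z.2) with hRdef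
    have hRbound : -(δ * ∑ i, y i^2) ≤ R := by
      have hterm : ∀ z : Fin n × Fin n,
          -( |if z.1 = z.2 then (E z.1 z.1).re else -‖E z.1 z.2‖| * |y z.1 * y z.2| )
            ≤ (if z.1 = z.2 then (E z.1 z.1).re else -‖E z.1 z.2‖) * (y z.1 * y z.2) := by
        intro z
        rw [← abs_mul]
        exact neg_abs_le _
      have h1 : ∑ z : Fin n × Fin n,
          -( |if z.1 = z.2 then (E z.1 z.1).re else -‖E z.1 z.2‖| * |y z.1 * y z.2| ) ≤ R := by
        rw [hRdef]; exact Finset.sum_le_sum fun z _ => hterm z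
      have h2 : ∑ z : Fin n × Fin n,
          |if z.1 = z.2 then (E z.1 z.1).re else -‖E z.1 z.2‖| * |y z.1 * y z.2|
            ≤ δ * ∑ i, y i^2 := by
        have hCS := Finset.sum_mul_sq_le_sq_mul_sq Finset.univ
          (fun z : Fin n × Fin n => |if z.1 = z.2 then (E z.1 z.1).re else -‖E z.1 z.2‖|)
          (fun z : Fin n × Fin n => |y z.1 * y z.2|)
        have hCsq : ∑ z : Fin n × Fin n,
            |if z.1 = z.2 then (E z.1 z.1).re else -‖E z.1 z.2‖|^2 ≤ δ^2 := by
          calc ∑ z : Fin n × Fin n, |if z.1 = z.2 then (E z.1 z.1).re else -‖E z.1 z.2‖|^2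
              = ∑ z : Fin n × Fin n, (if z.1 = z.2 then (E z.1 z.1).re else -‖E z.1 z.2‖)^2 := by
                exact Finset.sum_congr rfl fun z _ => sq_abs _
            _ ≤ δ^2 := hCsum
        have hysq : ∑ z : Fin n × Fin n, |y z.1 * y z.2|^2 = (∑ i, y i^2)^2 := by
          rw [Fintype.sum_prod_type]
          have : ∀ i j : Fin n, |y i * y j|^2 = y i^2 * y j^2 := by
            intro i j; rw [sq_abs]; ring
          calc ∑ i, ∑ j, |y i * y j|^2 = ∑ i, ∑ j, y i^2 * y j^2 := by
                exact Finset.sum_congr rfl fun i _ => Finset.sum_congr rfl fun j _ => this i j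
            _ = (∑ i, y i^2) * (∑ j, y j^2) := by rw [← Finset.sum_mul_sum]
            _ = (∑ i, y i^2)^2 := (sq _).symm
        have hlhs0 : 0 ≤ ∑ z : Fin n × Fin n,
            |if z.1 = z.2 then (E z.1 z.1).re else -‖E z.1 z.2‖| * |y z.1 * y z.2| :=
          Finset.sum_nonneg fun z _ => mul_nonneg (abs_nonneg _) (abs_nonneg _)
        have hrhs0 : 0 ≤ δ * ∑ i, y i^2 := mul_nonneg hδ0.le hy2pos.le
        have hsq : (∑ z : Fin n × Fin n,
            |if z.1 = z.2 then (E z.1 z.1).re else -‖E z.1 z.2‖| * |y z.1 * y z.2|)^2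
            ≤ (δ * ∑ i, y i^2)^2 := by
          calc _ ≤ (∑ z : Fin n × Fin n, |if z.1 = z.2 then (E z.1 z.1).re else -‖E z.1 z.2‖|^2)
                * ∑ z : Fin n × Fin n, |y z.1 * y z.2|^2 := hCS
            _ ≤ δ^2 * (∑ i, y i^2)^2 := by
                rw [hysq]
                apply mul_le_mul_of_nonneg_right hCsq (sq_nonneg _)
            _ = (δ * ∑ i, y i^2)^2 := by ring
        nlinarith [hsq, hlhs0, hrhs0]
      have h3 : -(δ * ∑ i, y i^2) ≤ ∑ z : Fin n × Fin n,
          -( |if z.1 = z.2 then (E z.1 z.1).re else -‖E z.1 z.2‖| * |y z.1 * y z.2| ) := by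
        rw [Finset.sum_neg_distrib]
        exact neg_le_neg h2
      linarith
    rw [hexp]
    nlinarith [hRbound, hy2pos, hδc]
  obtain ⟨d, hd0, hMd⟩ := exists_pos_solution M hoff hPD
  -- the decomposition vectors
  set a : Fin n → Fin n → ℝ :=
    fun i j => Real.sqrt (d j / (d i * ‖E i j‖)) / Real.sqrt 2 with ha_def
  set b : Fin n → Fin n → ℝ :=
    fun i j => Real.sqrt (‖E i j‖ * d i / d j) / Real.sqrt 2 with hb_def
  have sq2 : Real.sqrt 2 * Real.sqrt 2 = 2 := Real.mul_self_sqrt (by norm_num)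
  have hL1 : ∀ i j : Fin n, E i j ≠ 0 → a i j * b i j = 1/2 := by
    intro i j hE0
    have hdi := hd0 i; have hdj := hd0 j
    have hnE : (0:ℝ) < ‖E i j‖ := norm_pos_iff.mpr hE0
    rw [ha_def, hb_def]
    simp only
    rw [div_mul_div_comm,
      ← Real.sqrt_mul (by positivity : (0:ℝ) ≤ d j / (d i * ‖E i j‖)), sq2]
    have h1 : d j / (d i * ‖E i j‖) * (‖E i j‖ * d i / d j) = 1 := by
      rw [div_mul_div_comm, div_eq_one_iff_eq (ne_of_gt (mul_pos (mul_pos hdi hnE) hdj))]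
      ring
    rw [h1, Real.sqrt_one]
  have hL2 : ∀ i j : Fin n, (a i j)^2 * ‖E i j‖^2 = ‖E i j‖ * d j / (2 * d i) := by
    intro i j
    have hdi := hd0 i; have hdj := hd0 j
    by_cases hE0 : E i j = 0
    · rw [hE0]; simp
    · have hnE : (0:ℝ) < ‖E i j‖ := norm_pos_iff.mpr hE0
      rw [ha_def]; simp only
      rw [div_pow, Real.sq_sqrt (by positivity : (0:ℝ) ≤ d j / (d i * ‖E i j‖)),
        Real.sq_sqrt (by norm_num : (0:ℝ) ≤ 2)]
      rw [div_div, div_mul_eq_mul_div,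
        div_eq_div_iff (ne_of_gt (mul_pos (mul_pos hdi hnE) (by norm_num : (0:ℝ) < 2)))
          (ne_of_gt (mul_pos (by norm_num : (0:ℝ) < 2) hdi))]
      ring
  have hL3 : ∀ i j : Fin n, (b i j)^2 = ‖E i j‖ * d i / (2 * d j) := by
    intro i j
    have hdi := hd0 i; have hdj := hd0 j
    rw [hb_def]; simp only
    rw [div_pow, Real.sq_sqrt (by positivity : (0:ℝ) ≤ ‖E i j‖ * d i / d j),
      Real.sq_sqrt (by norm_num : (0:ℝ) ≤ 2)]
    rw [div_div, mul_comm (d j) 2]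
  set w : Fin n × Fin n → Fin n → ℂ := fun z l =>
    if z.1 = z.2 then (if l = z.1 then (((Real.sqrt (d z.1))⁻¹ : ℝ) : ℂ) else 0)
    else if l = z.1 then ((a z.1 z.2 : ℝ) : ℂ) * E z.1 z.2
    else if l = z.2 then ((b z.1 z.2 : ℝ) : ℂ)
    else 0
    with hw_def
  -- off-diagonal pointwise identity
  have hptOff : ∀ p q : Fin n, p ≠ q → ∀ z : Fin n × Fin n,
      w z p * (starRingEnd ℂ) (w z q)
        = (if z = (p,q) then E p q / 2 else 0) + (if z = (q,p) then E p q / 2 else 0) := by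
    intro p q hpq z
    obtain ⟨i, j⟩ := z
    by_cases hij : i = j
    · subst hij
      have h1 : ((i,i) : Fin n × Fin n) ≠ (p,q) := by
        intro h; rw [Prod.mk.injEq] at h; exact hpq (h.1.symm.trans h.2)
      have h2 : ((i,i) : Fin n × Fin n) ≠ (q,p) := by
        intro h; rw [Prod.mk.injEq] at h; exact hpq (h.2.symm.trans h.1)
      rw [if_neg h1, if_neg h2, add_zero]
      by_cases hpi : p = i
      · have hqi : q ≠ i := fun h => hpq (hpi.trans h.symm)
        simp [hw_def, hpi, hqi]
      · simp [hw_def, hpi]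
    · by_cases hpi : p = i
      · by_cases hqj : q = j
        · subst hpi; subst hqj
          have h2 : ((p,q) : Fin n × Fin n) ≠ (q,p) := by
            intro h; rw [Prod.mk.injEq] at h; exact hpq h.1
          rw [if_pos rfl, if_neg h2, add_zero]
          have hqp : q ≠ p := hpq.symm
          have lhs1 : w (p,q) p = ((a p q : ℝ) : ℂ) * E p q := by
            simp [hw_def, hij]
          have lhs2 : w (p,q) q = ((b p q : ℝ) : ℂ) := by
            simp [hw_def, hij, hqp]
          rw [lhs1, lhs2, Complex.conj_ofReal]
          by_cases hE0 : E p q = 0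
          · rw [hE0]; ring
          · have hab := hL1 p q hE0
            calc ((a p q : ℝ) : ℂ) * E p q * ((b p q : ℝ) : ℂ)
                = ((a p q * b p q : ℝ) : ℂ) * E p q := by push_cast; ring
              _ = E p q / 2 := by rw [hab]; push_cast; ring
        · have hqi : q ≠ i := fun h => hpq (hpi.trans h.symm)
          have h1 : ((i,j) : Fin n × Fin n) ≠ (p,q) := by
            intro h; rw [Prod.mk.injEq] at h; exact hqj h.2.symm
          have h2 : ((i,j) : Fin n × Fin n) ≠ (q,p) := by
            intro h; rw [Prod.mk.injEq] at h; exact hqi h.1.symm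
          rw [if_neg h1, if_neg h2, add_zero]
          have : w (i,j) q = 0 := by simp [hw_def, hij, hqi, hqj]
          rw [this, _root_.map_zero, mul_zero]
      · by_cases hpj : p = j
        · by_cases hqi : q = i
          · subst hpj; subst hqi
            have h1 : ((q,p) : Fin n × Fin n) ≠ (p,q) := by
              intro h; rw [Prod.mk.injEq] at h; exact hpq h.2
            rw [if_neg h1, if_pos rfl, zero_add]
            have hpq' : p ≠ q := hpq
            have lhs1 : w (q,p) p = ((b q p : ℝ) : ℂ) := by
              simp [hw_def, hij, hpq']
            have lhs2 : w (q,p) q = ((a q p : ℝ) : ℂ) * E q p := by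
              simp [hw_def, hij]
            rw [lhs1, lhs2, _root_.map_mul, Complex.conj_ofReal]
            by_cases hE0 : E q p = 0
            · have hE0' : E p q = 0 := by
                rw [← hEc q p, hE0, _root_.map_zero]
              rw [hE0, hE0', _root_.map_zero]; ring
            · have hab := hL1 q p hE0
              calc ((b q p : ℝ) : ℂ) * (((a q p : ℝ) : ℂ) * (starRingEnd ℂ) (E q p))
                  = ((a q p * b q p : ℝ) : ℂ) * (starRingEnd ℂ) (E q p) := by push_cast; ring
                _ = ((1/2 : ℝ) : ℂ) * E p q := by rw [hab, hEc q p]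
                _ = E p q / 2 := by push_cast; ring
          · have hqj : q ≠ j := fun h => hpq ((h.trans hpj.symm).symm)
            have h1 : ((i,j) : Fin n × Fin n) ≠ (p,q) := by
              intro h; rw [Prod.mk.injEq] at h; exact hpi h.1.symm
            have h2 : ((i,j) : Fin n × Fin n) ≠ (q,p) := by
              intro h; rw [Prod.mk.injEq] at h; exact hqi h.1.symm
            rw [if_neg h1, if_neg h2, add_zero]
            have : w (i,j) q = 0 := by simp [hw_def, hij, hqi, hqj]
            rw [this, _root_.map_zero, mul_zero]
        · have h1 : ((i,j) : Fin n × Fin n) ≠ (p,q) := by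
            intro h; rw [Prod.mk.injEq] at h; exact hpi h.1.symm
          have h2 : ((i,j) : Fin n × Fin n) ≠ (q,p) := by
            intro h; rw [Prod.mk.injEq] at h; exact hpj h.2.symm
          rw [if_neg h1, if_neg h2, add_zero]
          have : w (i,j) p = 0 := by simp [hw_def, hij, hpi, hpj]
          rw [this, zero_mul]
  -- diagonal pointwise identity
  have hptDiag : ∀ p : Fin n, ∀ z : Fin n × Fin n,
      w z p * (starRingEnd ℂ) (w z p)
        = (((if z = (p,p) then (d p)⁻¹
            else if z.1 = p ∧ z.2 ≠ p then ‖E p z.2‖ * d z.2 / (2 * d p)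
            else if z.1 ≠ p ∧ z.2 = p then ‖E z.1 p‖ * d z.1 / (2 * d p)
            else 0 : ℝ)) : ℂ) := by
    intro p z
    obtain ⟨i, j⟩ := z
    by_cases hij : i = j
    · subst hij
      by_cases hpi : p = i
      · subst hpi
        have h1 : ((p,p) : Fin n × Fin n) = (p,p) := rfl
        rw [if_pos h1]
        have lhs1 : w (p,p) p = (((Real.sqrt (d p))⁻¹ : ℝ) : ℂ) := by
          simp [hw_def]
        rw [lhs1, Complex.conj_ofReal, ← Complex.ofReal_mul]
        congr 1
        rw [← mul_inv, Real.mul_self_sqrt (hd0 p).le]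
      · have h1 : ((i,i) : Fin n × Fin n) ≠ (p,p) := by
          intro h; rw [Prod.mk.injEq] at h; exact hpi h.1.symm
        rw [if_neg h1]
        have hip : i ≠ p := fun h => hpi h.symm
        have : w (i,i) p = 0 := by simp [hw_def, hpi]
        rw [this, zero_mul]
        simp [hip]
    · by_cases hpi : p = i
      · subst hpi
        have h1 : ((p,j) : Fin n × Fin n) ≠ (p,p) := by
          intro h; rw [Prod.mk.injEq] at h; exact hij h.2.symm
        have hjp : j ≠ p := fun h => hij h.symm
        rw [if_neg h1, if_pos ⟨rfl, hjp⟩]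
        have lhs1 : w (p,j) p = ((a p j : ℝ) : ℂ) * E p j := by
          simp [hw_def, hij]
        rw [lhs1]
        have : ((a p j : ℝ) : ℂ) * E p j * (starRingEnd ℂ) (((a p j : ℝ) : ℂ) * E p j)
            = (((a p j)^2 * ‖E p j‖^2 : ℝ) : ℂ) := by
          rw [_root_.map_mul, Complex.conj_ofReal]
          rw [show ((a p j : ℝ) : ℂ) * E p j * (((a p j : ℝ) : ℂ) * (starRingEnd ℂ) (E p j))
              = ((a p j : ℝ) : ℂ) * ((a p j : ℝ) : ℂ) * (E p j * (starRingEnd ℂ) (E p j)) by ring]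
          rw [Complex.mul_conj]
          rw [Complex.normSq_eq_norm_sq]
          push_cast
          ring
        rw [this, hL2 p j]
      · by_cases hpj : p = j
        · subst hpj
          have h1 : ((i,p) : Fin n × Fin n) ≠ (p,p) := by
            intro h; rw [Prod.mk.injEq] at h; exact hij (h.1.trans h.2.symm)
          have hip : i ≠ p := fun h => hij h
          rw [if_neg h1]
          have h2 : ¬ (i = p ∧ p ≠ p) := by simp
          rw [if_neg h2, if_pos ⟨hip, rfl⟩]
          have lhs1 : w (i,p) p = ((b i p : ℝ) : ℂ) := by
            simp [hw_def, hij, hpi]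
          rw [lhs1, Complex.conj_ofReal, ← Complex.ofReal_mul]
          congr 1
          have := hL3 i p
          rw [sq] at this
          linarith [this]
        · have h1 : ((i,j) : Fin n × Fin n) ≠ (p,p) := by
            intro h; rw [Prod.mk.injEq] at h; exact hpi h.1.symm
          rw [if_neg h1]
          have hip : i ≠ p := fun h => hpi h.symm
          have hjp : j ≠ p := fun h => hpj h.symm
          have h2 : ¬ (i = p ∧ j ≠ p) := fun h => hip h.1
          have h3 : ¬ (i ≠ p ∧ j = p) := fun h => hjp h.2
          rw [if_neg h2, if_neg h3]
          have : w (i,j) p = 0 := by simp [hw_def, hij, hpi, hpj]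
          rw [this, zero_mul]
          simp
  -- entry sums
  have hSumOff : ∀ p q : Fin n, p ≠ q →
      ∑ z : Fin n × Fin n, w z p * (starRingEnd ℂ) (w z q) = E p q := by
    intro p q hpq
    rw [Finset.sum_congr rfl (fun z _ => hptOff p q hpq z), Finset.sum_add_distrib,
      Finset.sum_ite_eq' Finset.univ ((p,q) : Fin n × Fin n) (fun _ => E p q / 2),
      Finset.sum_ite_eq' Finset.univ ((q,p) : Fin n × Fin n) (fun _ => E p q / 2)]
    simp only [Finset.mem_univ, if_pos]
    ring
  have hSumDiag : ∀ p : Fin n,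
      ∑ z : Fin n × Fin n, w z p * (starRingEnd ℂ) (w z p) = ((c + (E p p).re : ℝ) : ℂ) := by
    intro p
    rw [Finset.sum_congr rfl (fun z _ => hptDiag p z), ← Complex.ofReal_sum]
    congr 1
    -- real computation
    have hsplit : ∀ z : Fin n × Fin n,
        (if z = (p,p) then (d p)⁻¹
          else if z.1 = p ∧ z.2 ≠ p then ‖E p z.2‖ * d z.2 / (2 * d p)
          else if z.1 ≠ p ∧ z.2 = p then ‖E z.1 p‖ * d z.1 / (2 * d p)
          else 0 : ℝ)
        = (if z = (p,p) then (d p)⁻¹ else 0)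
          + (if z.1 = p ∧ z.2 ≠ p then ‖E p z.2‖ * d z.2 / (2 * d p) else 0)
          + (if z.1 ≠ p ∧ z.2 = p then ‖E z.1 p‖ * d z.1 / (2 * d p) else 0) := by
      intro z
      obtain ⟨i, j⟩ := z
      by_cases h1 : i = p <;> by_cases h2 : j = p <;>
        simp [h1, h2, Prod.mk.injEq]
    rw [Finset.sum_congr rfl (fun z _ => hsplit z), Finset.sum_add_distrib,
      Finset.sum_add_distrib]
    have hS1 : ∑ z : Fin n × Fin n, (if z = (p,p) then (d p)⁻¹ else 0) = (d p)⁻¹ := by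
      rw [Finset.sum_ite_eq' Finset.univ ((p,p) : Fin n × Fin n) (fun _ => (d p)⁻¹)]
      simp
    have hS2 : ∑ z : Fin n × Fin n,
        (if z.1 = p ∧ z.2 ≠ p then ‖E p z.2‖ * d z.2 / (2 * d p) else 0)
        = ∑ j ∈ Finset.univ.erase p, ‖E p j‖ * d j / (2 * d p) := by
      rw [Fintype.sum_prod_type]
      have step : ∀ i : Fin n, ∑ j : Fin n,
          (if i = p ∧ j ≠ p then ‖E p j‖ * d j / (2 * d p) else 0)
          = if i = p then (∑ j ∈ Finset.univ.erase p, ‖E p j‖ * d j / (2 * d p)) else 0 := by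
        intro i
        by_cases h : i = p
        · subst h
          rw [if_pos rfl]
          have e : ∀ j : Fin n, (if i = i ∧ j ≠ i then ‖E i j‖ * d j / (2 * d i) else 0)
              = if j ≠ i then ‖E i j‖ * d j / (2 * d i) else 0 := by
            intro j; by_cases hj : j = i <;> simp [hj]
          rw [Finset.sum_congr rfl (fun j _ => e j), ← Finset.sum_filter, Finset.filter_ne']
        · rw [if_neg h]
          apply Finset.sum_eq_zero
          intro j _
          rw [if_neg (fun hc => h hc.1)]
      rw [Finset.sum_congr rfl (fun i _ => step i),
        Finset.sum_ite_eq' Finset.univ p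
          (fun _ => ∑ j ∈ Finset.univ.erase p, ‖E p j‖ * d j / (2 * d p))]
      simp
    have hS3 : ∑ z : Fin n × Fin n,
        (if z.1 ≠ p ∧ z.2 = p then ‖E z.1 p‖ * d z.1 / (2 * d p) else 0)
        = ∑ i ∈ Finset.univ.erase p, ‖E p i‖ * d i / (2 * d p) := by
      rw [Fintype.sum_prod_type]
      have step : ∀ i : Fin n, ∑ j : Fin n,
          (if i ≠ p ∧ j = p then ‖E i p‖ * d i / (2 * d p) else 0)
          = if i ≠ p then ‖E i p‖ * d i / (2 * d p) else 0 := by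
        intro i
        by_cases h : i = p
        · subst h
          simp
        · rw [if_pos h]
          have : ∀ j : Fin n, (if i ≠ p ∧ j = p then ‖E i p‖ * d i / (2 * d p) else 0)
              = if j = p then ‖E i p‖ * d i / (2 * d p) else 0 := by
            intro j
            by_cases hj : j = p
            · rw [if_pos ⟨h, hj⟩, if_pos hj]
            · rw [if_neg (fun hc => hj hc.2), if_neg hj]
          rw [Finset.sum_congr rfl (fun j _ => this j),
            Finset.sum_ite_eq' Finset.univ p (fun _ => ‖E i p‖ * d i / (2 * d p))]
          simp
      rw [Finset.sum_congr rfl (fun i _ => step i), ← Finset.sum_filter,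
        Finset.filter_ne']
      apply Finset.sum_congr rfl
      intro i hi
      rw [habs i p]
    rw [hS1, hS2, hS3]
    -- use M *ᵥ d = 1 at p
    have hMdp : (c + (E p p).re) * d p - ∑ j ∈ Finset.univ.erase p, ‖E p j‖ * d j = 1 := by
      have h1 : (M *ᵥ d) p = 1 := by rw [hMd]
      have h2 : (M *ᵥ d) p = M p p * d p + ∑ j ∈ Finset.univ.erase p, M p j * d j := by
        simp only [mulVec, dotProduct]
        rw [← Finset.add_sum_erase _ _ (Finset.mem_univ p)]
      have h3 : ∑ j ∈ Finset.univ.erase p, M p j * d j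
          = -∑ j ∈ Finset.univ.erase p, ‖E p j‖ * d j := by
        rw [← Finset.sum_neg_distrib]
        apply Finset.sum_congr rfl
        intro j hj
        have hjp : p ≠ j := fun h => (Finset.mem_erase.mp hj).1 h.symm
        rw [hMapp, if_neg hjp]; ring
      have h4 : M p p = c + (E p p).re := by rw [hMapp, if_pos rfl]
      rw [h2, h3, h4] at h1
      linarith
    have hdp := hd0 p
    have hsum_div : ∑ j ∈ Finset.univ.erase p, ‖E p j‖ * d j / (2 * d p)
        = (∑ j ∈ Finset.univ.erase p, ‖E p j‖ * d j) / (2 * d p) := by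
      rw [Finset.sum_div]
    rw [hsum_div]
    have hdpne : d p ≠ 0 := ne_of_gt hdp
    have hT : ∑ j ∈ Finset.univ.erase p, ‖E p j‖ * d j = (c + (E p p).re) * d p - 1 := by
      linarith
    rw [hT]
    field_simp
    ring
  -- the matrix sum identity
  have hsum : ∑ z : Fin n × Fin n, vecMulVec (w z) (star (w z))
      = ((c : ℝ) : ℂ) • (1 : Matrix (Fin n) (Fin n) ℂ) + E := by
    ext p q
    rw [Matrix.sum_apply]
    have hent : ∀ z : Fin n × Fin n,
        vecMulVec (w z) (star (w z)) p q = w z p * (starRingEnd ℂ) (w z q) := by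
      intro z
      simp [vecMulVec_apply, Pi.star_apply, Complex.star_def]
    rw [Finset.sum_congr rfl (fun z _ => hent z)]
    by_cases hpq : p = q
    · subst hpq
      rw [hSumDiag p]
      simp only [Matrix.add_apply, Matrix.smul_apply, Matrix.one_apply_eq, smul_eq_mul, mul_one]
      conv_rhs => rw [hdiagre p]
      push_cast
      ring
    · rw [hSumOff p q hpq]
      simp [Matrix.add_apply, Matrix.smul_apply, Matrix.one_apply_ne hpq]
  -- the u-part
  set ru : Fin n → ℂ := fun l => ((Real.sqrt (γ * (1-x)) : ℝ) : ℂ) * u l with hru_def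
  have hγx : 0 ≤ γ * (1-x) := mul_nonneg hγ0.le (by linarith)
  have hru : vecMulVec ru (star ru) = ((γ * (1-x) : ℝ) : ℂ) • vecMulVec u (star u) := by
    ext p q
    simp only [vecMulVec_apply, Matrix.smul_apply, Pi.star_apply, hru_def, smul_eq_mul]
    rw [Complex.star_def, _root_.map_mul, Complex.conj_ofReal]
    have h1 : ((Real.sqrt (γ * (1-x)) : ℝ) : ℂ) * ((Real.sqrt (γ * (1-x)) : ℝ) : ℂ)
        = ((γ * (1-x) : ℝ) : ℂ) := by
      rw [← Complex.ofReal_mul, Real.mul_self_sqrt hγx]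
    calc ((Real.sqrt (γ * (1-x)) : ℝ) : ℂ) * u p
          * (((Real.sqrt (γ * (1-x)) : ℝ) : ℂ) * (starRingEnd ℂ) (u q))
        = (((Real.sqrt (γ * (1-x)) : ℝ) : ℂ) * ((Real.sqrt (γ * (1-x)) : ℝ) : ℂ))
          * (u p * (starRingEnd ℂ) (u q)) := by ring
      _ = ((γ * (1-x) : ℝ) : ℂ) * (u p * star (u q)) := by rw [h1]; rfl
  -- the decomposition
  have hXdecomp :
      (((1 - δ * Real.sqrt n : ℝ) : ℂ) •
          (((x / n : ℝ) : ℂ) • (1 : Matrix (Fin n) (Fin n) ℂ) +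
            ((1 - x : ℝ) : ℂ) • vecMulVec u (star u))) + E
      = vecMulVec ru (star ru) + ∑ z : Fin n × Fin n, vecMulVec (w z) (star (w z)) := by
    rw [hsum, hru]
    rw [smul_add, smul_smul, smul_smul]
    have e1 : (((1 - δ * Real.sqrt n : ℝ) : ℂ)) * ((x / n : ℝ) : ℂ) = ((c : ℝ) : ℂ) := by
      rw [hc_def, hγ_def, hs_def]
      push_cast
      ring
    have e2 : (((1 - δ * Real.sqrt n : ℝ) : ℂ)) * ((1 - x : ℝ) : ℂ)
        = ((γ * (1-x) : ℝ) : ℂ) := by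
      rw [hγ_def, hs_def]
      push_cast
      ring
    rw [e1, e2]
    abel
  -- conclude
  refine ⟨?_, ?_, ?_⟩
  · rw [hXdecomp]
    refine Matrix.PosSemidef.add (posSemidef_vecMulVec_star ru) ?_
    exact Finset.sum_induction _ _ (fun _ _ ha hb => ha.add hb) Matrix.PosSemidef.zero
      (fun z _ => posSemidef_vecMulVec_star (w z))
  · rw [hXdecomp]
    apply kinc_add
    · apply kinc_single
      refine le_trans (Finset.card_le_card ?_) hsupp
      intro l hl
      simp only [Finset.mem_filter, Finset.mem_univ, true_and] at hl ⊢
      intro h0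
      apply hl
      rw [hru_def]
      simp [h0]
    · apply kinc_sum
      intro z _
      apply kinc_single
      refine le_trans (suppCard_le_of_subset _ {z.1, z.2} ?_) (le_trans ?_ hk)
      · intro l hl
        by_contra hmem
        simp only [Finset.mem_insert, Finset.mem_singleton] at hmem
        push_neg at hmem
        apply hl
        simp [hw_def, hmem.1, hmem.2]
      · apply le_trans (Finset.card_insert_le _ _)
        simp
  · -- trace
    have htru : (vecMulVec u (star u)).trace = 1 := by
      have hterm : ∀ i, (vecMulVec u (star u)) i i = ((‖u i‖^2 : ℝ) : ℂ) := by
        intro i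
        rw [vecMulVec_apply, Pi.star_apply, Complex.star_def, Complex.mul_conj,
          Complex.normSq_eq_norm_sq]
      have h1 : (vecMulVec u (star u)).trace = ∑ i, (vecMulVec u (star u)) i i := rfl
      rw [h1, Finset.sum_congr rfl (fun i _ => hterm i), ← Complex.ofReal_sum, hu,
        Complex.ofReal_one]
    rw [Matrix.trace_add, Matrix.trace_smul, Matrix.trace_add, Matrix.trace_smul,
      Matrix.trace_smul, Matrix.trace_one, htru]
    have hxc : ((x / n : ℝ) : ℂ) • (((Fintype.card (Fin n)) : ℂ)) = ((x : ℝ) : ℂ) := by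
      rw [Fintype.card_fin]
      rw [smul_eq_mul]
      rw [← Complex.ofReal_natCast, ← Complex.ofReal_mul]
      congr 1
      field_simp
    rw [hxc]
    have : (((1 - δ * Real.sqrt n : ℝ) : ℂ) • (((x:ℝ):ℂ) + ((1 - x : ℝ) : ℂ) • (1:ℂ)))
        = ((γ : ℝ) : ℂ) := by
      simp only [smul_eq_mul]
      rw [hγ_def, hs_def]
      push_cast
      ring
    rw [this]
    -- now: (↑γ + trace E).re ≤ 1
    rw [Complex.add_re, Complex.ofReal_re]
    have htrE : (E.trace).re = ∑ i, (E i i).re := by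
      rw [Matrix.trace]
      exact Complex.re_sum Finset.univ _
    rw [htrE]
    have h2 : ∑ i, (E i i).re^2 ≤ δ^2 := by
      refine le_trans ?_ hFr
      apply Finset.sum_le_sum
      intro i _
      have h1 := Complex.abs_re_le_norm (E i i)
      have hterm : (E i i).re^2 ≤ ‖E i i‖^2 := by
        calc (E i i).re^2 = |(E i i).re|^2 := (sq_abs _).symm
          _ ≤ (‖E i i‖)^2 := by
              apply pow_le_pow_left₀ (abs_nonneg _) h1
      refine le_trans hterm ?_
      exact Finset.single_le_sum (f := fun j => ‖E i j‖^2) (fun j _ => sq_nonneg _)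
        (Finset.mem_univ i)
    have h1 : (∑ i, (E i i).re)^2 ≤ (n:ℝ) * ∑ i, (E i i).re^2 := by
      have := Finset.sum_mul_sq_le_sq_mul_sq Finset.univ (fun _ : Fin n => (1:ℝ))
        (fun i => (E i i).re)
      simpa [Finset.card_univ] using this
    have h3 : (∑ i, (E i i).re)^2 ≤ (s*δ)^2 := by nlinarith [hss, h2, h1]
    have h4 : ∑ i, (E i i).re ≤ s*δ := by
      nlinarith [h3, mul_nonneg hs0.le hδ0.le]
    rw [hγ_def] at *
    linarith
end
end

section
/- Let n, k be positive integers with 1 ≤ k ≤ n and let X ∈ I_k. Then there exist m ≤ n² + 1 vectors v_1, …, v_m ∈ ℂ^n, each having at most k nonzero entries, such that X = ∑_{i=1}^m v_i v_i*. -/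
open Matrix BigOperators Finset ComplexOrder

noncomputable section

private lemma selfAdj_vecMulVec {n : ℕ} (v : Fin n → ℂ) :
    IsSelfAdjoint (vecMulVec v (star v)) := by
  ext i j
  simp [vecMulVec_apply, conjTranspose_apply, mul_comm]

private def hermToReal (n : ℕ) :
    selfAdjoint (Matrix (Fin n) (Fin n) ℂ) →ₗ[ℝ] (Fin n × Fin n → ℝ) where
  toFun A p := if p.1 ≤ p.2 then ((A : Matrix (Fin n) (Fin n) ℂ) p.1 p.2).re
    else ((A : Matrix (Fin n) (Fin n) ℂ) p.1 p.2).im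
  map_add' A B := by
    funext p; by_cases h : p.1 ≤ p.2 <;> simp [h, Matrix.add_apply]
  map_smul' r A := by
    funext p
    by_cases h : p.1 ≤ p.2 <;>
      simp [h, Matrix.smul_apply, Complex.real_smul]

private lemma hermToReal_inj (n : ℕ) : Function.Injective (hermToReal n) := by
  rw [injective_iff_map_eq_zero]
  intro A hA
  have hconj : ∀ i j, (A : Matrix (Fin n) (Fin n) ℂ) j i
      = starRingEnd ℂ ((A : Matrix (Fin n) (Fin n) ℂ) i j) := by
    intro i j
    have h : star (A : Matrix (Fin n) (Fin n) ℂ) = A := A.2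
    conv_lhs => rw [← h]
    simp [conjTranspose_apply]
  have key : ∀ i j : Fin n, (i ≤ j → ((A : Matrix (Fin n) (Fin n) ℂ) i j).re = 0)
      ∧ (¬ i ≤ j → ((A : Matrix (Fin n) (Fin n) ℂ) i j).im = 0) := by
    intro i j
    have h := congrFun hA (i, j)
    constructor <;> intro hle <;> simpa [hermToReal, hle] using h
  have hzero : ∀ i j : Fin n, i ≤ j → (A : Matrix (Fin n) (Fin n) ℂ) i j = 0 := by
    intro i j hij
    apply Complex.ext
    · simpa using (key i j).1 hij
    · rcases eq_or_lt_of_le hij with rfl | hlt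
      · have h2 := congrArg Complex.im (hconj i i)
        simp only [Complex.conj_im] at h2
        simp only [Complex.zero_im]
        linarith
      · have h1 := (key j i).2 (not_le.mpr hlt)
        have h2 := congrArg Complex.im (hconj i j)
        simp only [Complex.conj_im] at h2
        simp only [Complex.zero_im]
        linarith [h1, h2]
  apply Subtype.ext
  ext i j
  rcases le_total i j with h | h
  · simpa using hzero i j h
  · have := hconj j i
    rw [hzero j i h, map_zero] at this
    simpa using this

private lemma herm_findim (n : ℕ) :
    FiniteDimensional ℝ (selfAdjoint (Matrix (Fin n) (Fin n) ℂ)) :=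
  FiniteDimensional.of_injective (hermToReal n) (hermToReal_inj n)

private lemma herm_finrank_le (n : ℕ) :
    Module.finrank ℝ (selfAdjoint (Matrix (Fin n) (Fin n) ℂ)) ≤ n ^ 2 := by
  have h := LinearMap.finrank_le_finrank_of_injective (hermToReal_inj n)
  simpa [Module.finrank_pi, sq] using h

private lemma suppCard_smul_le {n : ℕ} (c : ℂ) (v : Fin n → ℂ) :
    suppCard (c • v) ≤ suppCard v := by
  classical
  apply Finset.card_le_card
  intro i hi
  simp only [Finset.mem_filter, Finset.mem_univ, true_and, Pi.smul_apply, smul_eq_mul] at hi ⊢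
  intro h
  exact hi (by simp [h])

private lemma vecMulVec_sqrt_smul {n : ℕ} (v : Fin n → ℂ) {r : ℝ} (hr : 0 ≤ r) :
    vecMulVec ((Real.sqrt r : ℂ) • v) (star ((Real.sqrt r : ℂ) • v))
      = r • vecMulVec v (star v) := by
  have hs : (Real.sqrt r : ℂ) * (Real.sqrt r : ℂ) = (r : ℂ) := by
    rw [← Complex.ofReal_mul, Real.mul_self_sqrt hr]
  ext i j
  simp only [vecMulVec_apply, Pi.smul_apply, Pi.star_apply, smul_eq_mul, star_mul',
    Matrix.smul_apply, Complex.real_smul, Complex.star_def, Complex.conj_ofReal]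
  rw [← hs]
  ring

/-- Carathéodory-type bound: every `X ∈ I_k` admits a `k`-incoherent decomposition with at
most `n² + 1` rank-one terms. -/
theorem caratheodory_Ik (n k : ℕ) (hn : 0 < n) (hk : 1 ≤ k) (hkn : k ≤ n)
    (X : Matrix (Fin n) (Fin n) ℂ) (hX : X ∈ Ik n k) :
    ∃ m : ℕ, m ≤ n ^ 2 + 1 ∧ ∃ v : Fin m → (Fin n → ℂ),
      (∀ i, suppCard (v i) ≤ k) ∧ X = ∑ i, vecMulVec (v i) (star (v i)) := by
  classical
  obtain ⟨hpsd, ⟨m₀, u, hu, hXe⟩, -⟩ := hX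
  rcases Nat.eq_zero_or_pos m₀ with rfl | hm₀
  · refine ⟨0, by omega, fun _ => 0, fun i => i.elim0, ?_⟩
    simpa using hXe
  haveI : FiniteDimensional ℝ (selfAdjoint (Matrix (Fin n) (Fin n) ℂ)) := herm_findim n
  set s : Set (selfAdjoint (Matrix (Fin n) (Fin n) ℂ)) :=
    {A | ∃ v : Fin n → ℂ, suppCard v ≤ k ∧
      (A : Matrix (Fin n) (Fin n) ℂ) = vecMulVec v (star v)} with hs
  set a : Fin m₀ → selfAdjoint (Matrix (Fin n) (Fin n) ℂ) :=
    fun i => ⟨vecMulVec (u i) (star (u i)), selfAdj_vecMulVec _⟩ with ha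
  have hmem : Finset.univ.centerMass (fun _ : Fin m₀ => (1:ℝ)) a ∈ convexHull ℝ s := by
    apply Finset.centerMass_mem_convexHull
    · intro i _; norm_num
    · simpa using (Nat.cast_pos.mpr hm₀ : (0:ℝ) < m₀)
    · intro i _; exact ⟨u i, hu i, rfl⟩
  obtain ⟨ι, hι, z, w, hzs, haff, hwpos, hwsum, hzw⟩ :=
    eq_pos_convex_span_of_mem_convexHull hmem
  have hcard : Fintype.card ι ≤ n ^ 2 + 1 := by
    have h1 := haff.card_le_finrank_succ
    have h2 : Module.finrank ℝ (vectorSpan ℝ (Set.range z))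
        ≤ Module.finrank ℝ (selfAdjoint (Matrix (Fin n) (Fin n) ℂ)) :=
      Submodule.finrank_le _
    have h3 := herm_finrank_le n
    omega
  have hm₀ne : ((m₀ : ℝ)) ≠ 0 := Nat.cast_ne_zero.mpr hm₀.ne'
  have hval : ((∑ i, w i • z i : selfAdjoint (Matrix (Fin n) (Fin n) ℂ))
      : Matrix (Fin n) (Fin n) ℂ) = (m₀ : ℝ)⁻¹ • X := by
    rw [hzw, Finset.centerMass]
    have hsum : ((∑ i, (1:ℝ) • a i : selfAdjoint (Matrix (Fin n) (Fin n) ℂ))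
        : Matrix (Fin n) (Fin n) ℂ) = X := by
      rw [hXe]
      simp only [one_smul]
      rw [AddSubmonoidClass.coe_finset_sum]
    simp only [Finset.sum_const, Finset.card_univ, Fintype.card_fin, nsmul_eq_mul, mul_one]
    rw [selfAdjoint.val_smul, hsum]
  choose vv hvv1 hvv2 using fun i : ι => hzs (Set.mem_range_self i)
  set g : ι → (Fin n → ℂ) := fun i => (Real.sqrt ((m₀ : ℝ) * w i) : ℂ) • vv i with hg
  set e : Fin (Fintype.card ι) ≃ ι := (Fintype.equivFin ι).symm with he
  refine ⟨Fintype.card ι, hcard, fun j => g (e j),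
    fun j => le_trans (suppCard_smul_le _ _) (hvv1 (e j)), ?_⟩
  have hterm : ∀ i : ι, vecMulVec (g i) (star (g i))
      = ((m₀ : ℝ) * w i) • (z i : Matrix (Fin n) (Fin n) ℂ) := by
    intro i
    rw [hg]
    rw [vecMulVec_sqrt_smul (vv i) (mul_nonneg (Nat.cast_nonneg _) (hwpos i).le), hvv2 i]
  calc X = (m₀ : ℝ) • ((m₀ : ℝ)⁻¹ • X) := by rw [smul_inv_smul₀ hm₀ne]
    _ = (m₀ : ℝ) • ((∑ i, w i • z i : selfAdjoint (Matrix (Fin n) (Fin n) ℂ))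
        : Matrix (Fin n) (Fin n) ℂ) := by rw [hval]
    _ = ∑ i : ι, ((m₀ : ℝ) * w i) • (z i : Matrix (Fin n) (Fin n) ℂ) := by
        rw [AddSubmonoidClass.coe_finset_sum, Finset.smul_sum]
        refine Finset.sum_congr rfl fun i _ => ?_
        rw [selfAdjoint.val_smul, smul_smul]
    _ = ∑ i : ι, vecMulVec (g i) (star (g i)) :=
        Finset.sum_congr rfl fun i _ => (hterm i).symm
    _ = ∑ j : Fin (Fintype.card ι), vecMulVec (g (e j)) (star (g (e j))) :=
        (Equiv.sum_comp e fun i => vecMulVec (g i) (star (g i))).symm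
end
end

section
/- Let n be a positive integer and let S ⊆ ℂ^n be a linear subspace with dim(S) = r. Then the set of subspaces { S ∩ {v ∈ ℂ^n : v_j = 0 for all j ∈ J} : J ⊆ {1,…,n} } is finite and has cardinality at most ∑_{j=0}^{r} binom(n, j). -/
open Matrix BigOperators Finset ComplexOrder

noncomputable section

/-- For a subspace `S ⊆ ℂ^n` of dimension `r`, the collection of all intersections of `S`
with coordinate subspaces is finite, of cardinality at most `∑_{j=0}^{r} C(n, j)`. -/
theorem coordinate_sections_finite (n r : ℕ) (hn : 0 < n)
    (S : Submodule ℂ (Fin n → ℂ)) (hr : Module.finrank ℂ S = r) :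
    {T : Submodule ℂ (Fin n → ℂ) | ∃ J : Finset (Fin n),
        T = S ⊓ Submodule.pi (↑J) (fun _ => (⊥ : Submodule ℂ ℂ))}.Finite ∧
    {T : Submodule ℂ (Fin n → ℂ) | ∃ J : Finset (Fin n),
        T = S ⊓ Submodule.pi (↑J) (fun _ => (⊥ : Submodule ℂ ℂ))}.ncard ≤
      ∑ j ∈ Finset.range (r + 1), n.choose j := by
  set f : Finset (Fin n) → Submodule ℂ (Fin n → ℂ) :=
    fun J => S ⊓ Submodule.pi (↑J) (fun _ => (⊥ : Submodule ℂ ℂ)) with hf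
  have hins : ∀ (a : Fin n) (J : Finset (Fin n)),
      f (insert a J) = f J ⊓ Submodule.pi (↑({a} : Finset (Fin n))) (fun _ => ⊥) := by
    intro a J
    ext v
    simp [hf, Submodule.mem_pi]
    tauto
  have key : ∀ J : Finset (Fin n), ∃ J', J' ⊆ J ∧ f J' = f J ∧
      J'.card + Module.finrank ℂ (f J) ≤ Module.finrank ℂ S := by
    intro J
    induction J using Finset.induction_on with
    | empty =>
        refine ⟨∅, Finset.Subset.refl _, rfl, ?_⟩
        have h0 : f ∅ = S := by ext v; simp [hf, Submodule.mem_pi]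
        rw [h0]; simp
    | insert a J ha ih =>
        obtain ⟨J', hJ'sub, hJ'eq, hJ'card⟩ := ih
        have heq : f (insert a J) = f (insert a J') := by
          rw [hins, hins, hJ'eq]
        by_cases hc : f (insert a J') = f J'
        · refine ⟨J', hJ'sub.trans (Finset.subset_insert a J), ?_, ?_⟩
          · rw [heq, hc]
          · rw [heq, hc, hJ'eq]; exact hJ'card
        · have hlt : f (insert a J') < f J' := by
            refine lt_of_le_of_ne ?_ hc
            rw [hins]; exact inf_le_left
          have hrank : Module.finrank ℂ (f (insert a J')) < Module.finrank ℂ (f J') :=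
            Submodule.finrank_lt_finrank_of_lt hlt
          refine ⟨insert a J', Finset.insert_subset_insert a hJ'sub, heq.symm, ?_⟩
          have h1 : (insert a J').card ≤ J'.card + 1 := Finset.card_insert_le a J'
          have h2 : Module.finrank ℂ (f (insert a J)) + 1 ≤ Module.finrank ℂ (f J) := by
            rw [heq, ← hJ'eq]; omega
          omega
  have hsub : {T : Submodule ℂ (Fin n → ℂ) | ∃ J : Finset (Fin n),
      T = S ⊓ Submodule.pi (↑J) (fun _ => (⊥ : Submodule ℂ ℂ))} =
      f '' {J : Finset (Fin n) | J.card ≤ r} := by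
    ext T
    constructor
    · rintro ⟨J, rfl⟩
      obtain ⟨J', _, hJ'eq, hJ'card⟩ := key J
      rw [hr] at hJ'card
      exact ⟨J', by simp only [Set.mem_setOf_eq]; omega, hJ'eq⟩
    · rintro ⟨J, _, rfl⟩
      exact ⟨J, rfl⟩
  set F : Finset (Finset (Fin n)) := Finset.univ.filter (fun J => J.card ≤ r) with hF
  have hFset : {J : Finset (Fin n) | J.card ≤ r} = ↑F := by
    ext J; simp [hF]
  have hfin : {T : Submodule ℂ (Fin n → ℂ) | ∃ J : Finset (Fin n),
      T = S ⊓ Submodule.pi (↑J) (fun _ => (⊥ : Submodule ℂ ℂ))}.Finite := by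
    rw [hsub, hFset]
    exact (F.finite_toSet).image f
  refine ⟨hfin, ?_⟩
  have hFcard : F.card ≤ ∑ j ∈ Finset.range (r + 1), n.choose j := by
    have hFsub : F ⊆ (Finset.range (r + 1)).biUnion
        (fun j => Finset.univ.powersetCard j) := by
      intro J hJ
      simp only [hF, Finset.mem_filter] at hJ
      simp only [Finset.mem_biUnion, Finset.mem_range, Finset.mem_powersetCard]
      exact ⟨J.card, by omega, Finset.subset_univ J, rfl⟩
    calc F.card ≤ _ := Finset.card_le_card hFsub
      _ ≤ ∑ j ∈ Finset.range (r + 1), (Finset.univ.powersetCard j).card :=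
          Finset.card_biUnion_le
      _ = ∑ j ∈ Finset.range (r + 1), n.choose j := by
          refine Finset.sum_congr rfl fun j _ => ?_
          rw [Finset.card_powersetCard, Finset.card_univ, Fintype.card_fin]
  calc _ = (f '' ↑F).ncard := by rw [hsub, hFset]
    _ ≤ (↑F : Set (Finset (Fin n))).ncard := Set.ncard_image_le F.finite_toSet
    _ = F.card := by rw [Set.ncard_coe_finset]
    _ ≤ _ := hFcard
end
end

section
/- The three trine states ψ_1 = (1, 0), ψ_2 = (−1/2, −√3/2), ψ_3 = (−1/2, √3/2) in ℂ^2 form an indexed list that is 2-learnable but not 1-learnable; that is, the list has learning width exactly 2. -/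
open Matrix BigOperators Finset ComplexOrder

noncomputable section

/-! ### Auxiliary material for the trine-states theorem -/

lemma psd_vecMulVec {d : ℕ} (w : Fin d → ℂ) : (vecMulVec w (star w)).PosSemidef := by
  have h : vecMulVec w (star w) = (replicateRow Unit (star w))ᴴ * replicateRow Unit (star w) := by
    rw [conjTranspose_replicateRow, star_star, ← vecMulVec_eq Unit]
  rw [h]; exact posSemidef_conjTranspose_mul_self _

/-- Scaled vectors orthogonal to the three trine states. -/
def trW : Fin 3 → Fin 2 → ℂ := fun i b =>
  ((![![0, Real.sqrt (2/3)],
      ![Real.sqrt (2/3) * (Real.sqrt 3 / 2), -(Real.sqrt (2/3) / 2)],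
      ![Real.sqrt (2/3) * (Real.sqrt 3 / 2), Real.sqrt (2/3) / 2]] i b : ℝ) : ℂ)

lemma star_trW (i : Fin 3) : star (trW i) = trW i :=
  funext fun _ => Complex.conj_ofReal _

/-- The POVM elements (up to reindexing). -/
def trA (i : Fin 3) : Matrix (Fin 2) (Fin 2) ℂ := vecMulVec (trW i) (star (trW i))

lemma trA_psd (i : Fin 3) : (trA i).PosSemidef := psd_vecMulVec _

lemma trA_apply (i : Fin 3) (a b : Fin 2) : trA i a b = trW i a * trW i b := by
  rw [trA, vecMulVec_apply, star_trW]

lemma hsC : ((Real.sqrt 3 : ℝ) : ℂ) * ((Real.sqrt 3 : ℝ) : ℂ) = 3 := by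
  rw [← Complex.ofReal_mul, Real.mul_self_sqrt (by norm_num)]; norm_num

lemma htC : ((Real.sqrt (2/3) : ℝ) : ℂ) * ((Real.sqrt (2/3) : ℝ) : ℂ) = 2/3 := by
  rw [← Complex.ofReal_mul, Real.mul_self_sqrt (by norm_num)]; norm_num

lemma trA_sum : ∑ i : Fin 3, trA i = 1 := by
  ext a b
  simp only [Matrix.sum_apply, Fin.sum_univ_three, trA_apply]
  fin_cases a <;> fin_cases b <;>
    simp only [trW, Matrix.cons_val_zero, Matrix.cons_val_one, Matrix.head_cons,
      Matrix.cons_val_two, Matrix.tail_cons, Fin.mk_zero, Fin.mk_one,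
      Matrix.one_apply, reduceIte, Fin.mk.injEq] <;>
    push_cast
  · linear_combination ((Real.sqrt 3 : ℝ) : ℂ) * ((Real.sqrt 3 : ℝ) : ℂ)/2 * htC
      + (1/3 : ℂ) * hsC
  · ring
  · ring
  · linear_combination ((3:ℂ)/2) * htC

lemma sqrt3C_ne : ((Real.sqrt 3 : ℝ) : ℂ) ≠ 0 := by
  exact_mod_cast (Real.sqrt_pos.mpr (by norm_num : (0:ℝ) < 3)).ne'

/-- The three trine states in `ℂ²` are `2`-learnable but not `1`-learnable:
their learning width is exactly `2`. -/
theorem trine_states_learning_width_two :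
    KLearnable 2 (![![(1 : ℂ), 0],
      ![-(1 / 2 : ℂ), -((Real.sqrt 3 : ℂ) / 2)],
      ![-(1 / 2 : ℂ), (Real.sqrt 3 : ℂ) / 2]]) ∧
    ¬ KLearnable 1 (![![(1 : ℂ), 0],
      ![-(1 / 2 : ℂ), -((Real.sqrt 3 : ℂ) / 2)],
      ![-(1 / 2 : ℂ), (Real.sqrt 3 : ℂ) / 2]]) := by
  constructor
  · -- 2-learnable
    refine ⟨fun S => ∑ i ∈ S.valᶜ, trA i, ?_, ?_, ?_⟩
    · intro S
      refine Finset.sum_induction _ _ (fun a b ha hb => ha.add hb) ?_ ?_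
      · exact Matrix.PosSemidef.zero
      · intro x _; exact trA_psd _
    · calc ∑ S : {S : Finset (Fin 3) // S.card = 2}, ∑ i ∈ S.valᶜ, trA i
          = ∑ S : {S : Finset (Fin 3) // S.card = 2}, ∑ i : Fin 3,
              if i ∉ S.val then trA i else 0 := by
            refine Finset.sum_congr rfl fun S _ => ?_
            rw [show S.valᶜ = univ.filter (fun i => i ∉ S.val) by ext x; simp,
              Finset.sum_filter]
        _ = ∑ i : Fin 3, ∑ S : {S : Finset (Fin 3) // S.card = 2},
              if i ∉ S.val then trA i else 0 := Finset.sum_comm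
        _ = ∑ i : Fin 3, trA i := by
            refine Finset.sum_congr rfl fun i _ => ?_
            rw [← Finset.sum_filter, Finset.sum_const,
              show (Finset.univ.filter fun S : {S : Finset (Fin 3) // S.card = 2} =>
                i ∉ S.val).card = 1 by revert i; decide]
            exact one_nsmul _
        _ = 1 := trA_sum
    · intro S i hi
      have h1 : S.valᶜ.card = 1 := by
        rw [Finset.card_compl, S.2]; simp
      obtain ⟨a, ha⟩ := Finset.card_eq_one.mp h1
      have h2 : i ∈ S.valᶜ := Finset.mem_compl.mpr hi
      rw [ha, Finset.mem_singleton] at h2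
      subst h2
      simp only [ha, Finset.sum_singleton]
      fin_cases i <;>
        simp [trA_apply, trW, Matrix.mulVec, dotProduct, Fin.sum_univ_two,
          Complex.star_def, _root_.map_mul, map_div₀, Complex.conj_ofReal] <;>
        ring
  · -- not 1-learnable
    rintro ⟨M, hpsd, hsum, hzero⟩
    have key : ∀ S : {S : Finset (Fin 3) // S.card = 1}, M S = 0 := by
      intro S
      obtain ⟨j, hj⟩ := Finset.card_eq_one.mp S.2
      have hv : ∀ i : Fin 3, i ≠ j →
          (M S) *ᵥ (![![(1 : ℂ), 0],
            ![-(1 / 2 : ℂ), -((Real.sqrt 3 : ℂ) / 2)],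
            ![-(1 / 2 : ℂ), (Real.sqrt 3 : ℂ) / 2]] i) = 0 := fun i hij =>
        ((hpsd S).dotProduct_mulVec_zero_iff _).mp
          (hzero S i (by rw [hj, Finset.mem_singleton]; exact hij))
      ext a b
      fin_cases j
      · -- annihilates ψ₁ and ψ₂
        have e1 := congrFun (hv 1 (by decide)) a
        have e2 := congrFun (hv 2 (by decide)) a
        simp [Matrix.mulVec, dotProduct, Fin.sum_univ_two] at e1 e2
        fin_cases b
        · simpa using (by linear_combination -e1 - e2 :
            M S a 0 = 0)
        · have h := (by linear_combination e2 - e1 :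
            M S a 1 * ((Real.sqrt 3 : ℝ) : ℂ) = 0)
          simpa using (mul_eq_zero.mp h).resolve_right sqrt3C_ne
      · -- annihilates ψ₀ and ψ₂
        have e0 := congrFun (hv 0 (by decide)) a
        have e2 := congrFun (hv 2 (by decide)) a
        simp [Matrix.mulVec, dotProduct, Fin.sum_univ_two] at e0 e2
        fin_cases b
        · simpa using (by linear_combination e0 : M S a 0 = 0)
        · have h := (by linear_combination 2*e2 + e0 :
            M S a 1 * ((Real.sqrt 3 : ℝ) : ℂ) = 0)
          simpa using (mul_eq_zero.mp h).resolve_right sqrt3C_ne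
      · -- annihilates ψ₀ and ψ₁
        have e0 := congrFun (hv 0 (by decide)) a
        have e1 := congrFun (hv 1 (by decide)) a
        simp [Matrix.mulVec, dotProduct, Fin.sum_univ_two] at e0 e1
        fin_cases b
        · simpa using (by linear_combination e0 : M S a 0 = 0)
        · have h := (by linear_combination -2*e1 - e0 :
            M S a 1 * ((Real.sqrt 3 : ℝ) : ℂ) = 0)
          simpa using (mul_eq_zero.mp h).resolve_right sqrt3C_ne
    rw [Finset.sum_congr rfl fun S _ => key S, Finset.sum_const, smul_zero] at hsum
    have h00 := congrFun (congrFun hsum 0) 0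
    simp [Matrix.one_apply] at h00

end
end
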